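/- Let P be a digital (0,m,s)-net in prime power base b. Then every gain coefficient satisfies Γ_{u,k} ≤ (b/(b−1))^{s−1}. -/

import Mathlib

open Finset

noncomputable section

/-- the `i`-th `b`-adic digit of a natural number `k`. -/
def ndigit (b k i : ℕ) : ℕ := k / b ^ i % b

/-- the `(i+1)`-st `b`-adic digit of a real number `x ∈ [0,1)`
(the unique expansion with infinitely many digits `≠ b-1`). -/
def rdigit (b : ℕ) (x : ℝ) (i : ℕ) : ℕ := (⌊(b : ℝ) ^ (i + 1) * x⌋).toNat % b

/-- the primitive `b`-th root of unity `ω_b = exp(2πi/b)`. -/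
def omg (b : ℕ) : ℂ := Complex.exp (2 * Real.pi * Complex.I / b)

/-- embed a digit (element of `Z_b`) into the finite field `F` via the bijection `φ`. -/
def toF {F : Type} [Field F] [Fintype F] (φ : Fin (Fintype.card F) ≃ F) (a : ℕ) : F :=
  φ ⟨a % Fintype.card F, Nat.mod_lt a Fintype.card_pos⟩

/-- map a field element back to a digit in `Z_b` via `φ⁻¹`. -/
def fromF {F : Type} [Field F] [Fintype F] (φ : Fin (Fintype.card F) ≃ F) (a : F) : ℕ :=
  (φ.symm a : ℕ)

/-- the `k`-th `b`-adic Walsh function, `b = |F|`,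
`wal_k(x) = ω_b^{φ⁻¹(φ(κ₀)φ(ξ₁)) + φ⁻¹(φ(κ₁)φ(ξ₂)) + ⋯}`. -/
def wal {F : Type} [Field F] [Fintype F] (φ : Fin (Fintype.card F) ≃ F) (k : ℕ) (x : ℝ) : ℂ :=
  omg (Fintype.card F) ^
    ∑ i ∈ Finset.range k,
      fromF φ (toF φ (ndigit (Fintype.card F) k i) * toF φ (rdigit (Fintype.card F) x i))

/-- the multivariate `b`-adic Walsh function `wal_k(x) = ∏_j wal_{k_j}(x_j)`. -/
def walv {F : Type} [Field F] [Fintype F] {s : ℕ} (φ : Fin (Fintype.card F) ≃ F)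
    (k : Fin s → ℕ) (x : Fin s → ℝ) : ℂ :=
  ∏ j, wal φ (k j) (x j)

/-- the `j`-th coordinate of the `h`-th point of the digital net with generating
matrices `C_1,…,C_s` (with `n` rows, `m` columns, rows of index `≥ n` unused). -/
def dnet {F : Type} [Field F] [Fintype F] {s m : ℕ} (φ : Fin (Fintype.card F) ≃ F)
    (C : Fin s → ℕ → Fin m → F) (n : ℕ) (h : ℕ) (j : Fin s) : ℝ :=
  ∑ i ∈ Finset.range n,
    (fromF φ (∑ c, C j i c * toF φ (ndigit (Fintype.card F) h (c : ℕ))) : ℝ) /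
      (Fintype.card F : ℝ) ^ (i + 1)

/-- membership in the dual net `P^⊥`:
`C_1^⊤ ν_n(k_1) + ⋯ + C_s^⊤ ν_n(k_s) = 0 ∈ F^m`. -/
def inDual {F : Type} [Field F] [Fintype F] {s m : ℕ} (φ : Fin (Fintype.card F) ≃ F)
    (C : Fin s → ℕ → Fin m → F) (n : ℕ) (k : Fin s → ℕ) : Prop :=
  ∀ c : Fin m,
    ∑ j, ∑ i ∈ Finset.range n, C j i c * toF φ (ndigit (Fintype.card F) (k j) i) = 0

/-- `V(u,k) = {ℓ ∈ ℕ₀^s : ℓ_j < b^{k_j} if j ∈ u, ℓ_j = 0 otherwise}`. -/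
def Vset (b : ℕ) {s : ℕ} (u : Finset (Fin s)) (k : Fin s → ℕ) : Finset (Fin s → ℕ) :=
  Fintype.piFinset fun j => Finset.range (if j ∈ u then b ^ k j else 1)

/-- `A(u,l) = {ℓ ∈ ℕ₀^s : b^{l_j-1} ≤ ℓ_j < b^{l_j} if j ∈ u, ℓ_j = 0 otherwise}`. -/
def Aset (b : ℕ) {s : ℕ} (u : Finset (Fin s)) (l : Fin s → ℕ) : Finset (Fin s → ℕ) :=
  (Vset b u l).filter fun ℓ => ∀ j ∈ u, b ^ (l j - 1) ≤ ℓ j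

/-- `k + 1_v`: add one to the components in `v`. -/
def plusOne {s : ℕ} (k : Fin s → ℕ) (v : Finset (Fin s)) : Fin s → ℕ :=
  fun j => if j ∈ v then k j + 1 else k j

/-- the gain coefficient `Γ_{u,k}` of an `N`-element point set in base `b`. -/
def gain {s : ℕ} (b N : ℕ) (x : Fin N → Fin s → ℝ) (u : Finset (Fin s))
    (k : Fin s → ℕ) : ℝ :=
  (1 / N) * ∑ i, ∑ i', ∏ j ∈ u,
    ((b * (if ⌊(b : ℝ) ^ (k j + 1) * x i j⌋ = ⌊(b : ℝ) ^ (k j + 1) * x i' j⌋ then (1:ℝ) else 0) -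
        (if ⌊(b : ℝ) ^ (k j) * x i j⌋ = ⌊(b : ℝ) ^ (k j) * x i' j⌋ then (1:ℝ) else 0)) /
      (b - 1))

/-- `C_{u,k}`: the matrix stacking the first `k_j` rows of `C_j` for `j ∈ u`
(a generating matrix `C_j` having `n` rows). -/
def Cuk {F : Type} [Field F] [Fintype F] {s m : ℕ} (C : Fin s → ℕ → Fin m → F) (n : ℕ)
    (u : Finset (Fin s)) (k : Fin s → ℕ) :
    Matrix ((j : Fin s) × Fin (min (if j ∈ u then k j else 0) n)) (Fin m) F :=
  fun p c => C p.1 (p.2 : ℕ) c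

/-- `C` generates a digital `(t,m,s)`-net in base `b = |F|`:
`C_{u,k}` has full row rank whenever `|k| ≤ m - t`. -/
def IsDigitalTNet {F : Type} [Field F] [Fintype F] {s m : ℕ}
    (C : Fin s → ℕ → Fin m → F) (n : ℕ) (t : ℕ) : Prop :=
  ∀ u : Finset (Fin s), ∀ k : Fin s → ℕ,
    (∑ j ∈ u, k j) + t ≤ m → (Cuk C n u k).rank = ∑ j ∈ u, k j

/-- the upper bound `B(u,k) = b^{m - rank(C_{u,k})} (b-1)^{rank(C_{u,k}) - rank(C_{u,k+1_u})}`. -/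
def Bcoef {F : Type} [Field F] [Fintype F] {s m : ℕ} (C : Fin s → ℕ → Fin m → F) (n : ℕ)
    (u : Finset (Fin s)) (k : Fin s → ℕ) : ℝ :=
  (Fintype.card F : ℝ) ^ ((m : ℤ) - ((Cuk C n u k).rank : ℤ)) *
    ((Fintype.card F : ℝ) - 1) ^
      (((Cuk C n u k).rank : ℤ) - ((Cuk C n u (plusOne k u)).rank : ℤ))

/-- `t*_u = m + 1 - min{|k| : k ∈ ℕ^{|u|}, C_{u,k} not full row rank}`. -/
def tstar {F : Type} [Field F] [Fintype F] {s m : ℕ} (C : Fin s → ℕ → Fin m → F) (n : ℕ)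
    (u : Finset (Fin s)) : ℤ :=
  (m : ℤ) + 1 -
    (sInf {r : ℕ | ∃ k : Fin s → ℕ, (∀ j ∈ u, 1 ≤ k j) ∧
      (Cuk C n u k).rank ≠ ∑ j ∈ u, k j ∧ r = ∑ j ∈ u, k j} : ℕ)

end

-- ======================= auxiliary development =======================

noncomputable section stmt13aux
open scoped Classical


/-- partial alternating binomial sum `c_d = ∑_{j≤d} (-1)^{d+j} C(p,j) b^j`. -/
def csum (b : ℝ) (p d : ℕ) : ℝ := ∑ j ∈ range (d+1), (-1)^(d+j) * (p.choose j) * b^j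

lemma csum_zero (b : ℝ) (p : ℕ) : csum b p 0 = 1 := by simp [csum]

lemma csum_succ (b : ℝ) (p d : ℕ) :
    csum b p (d+1) = (p.choose (d+1)) * b^(d+1) - csum b p d := by
  rw [csum, sum_range_succ]
  have h1 : ∀ j ∈ range (d+1), (-1:ℝ)^(d+1+j) * (p.choose j) * b^j
      = -((-1)^(d+j) * (p.choose j) * b^j) := by
    intro j _
    rw [show d+1+j = (d+j)+1 by omega, pow_succ]
    ring
  rw [sum_congr rfl h1, Finset.sum_neg_distrib]
  have h2 : (-1:ℝ)^(d+1+(d+1)) = 1 := by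
    rw [show d+1+(d+1) = 2*(d+1) by omega, pow_mul]
    norm_num
  rw [h2, csum]
  ring

lemma choose_cast_le {p d b : ℕ} (hd : d < p) (hpb : p ≤ b) :
    ((p.choose d : ℝ)) * (b:ℝ)^d ≤ (p.choose (d+1)) * (b:ℝ)^(d+1) := by
  have hnat : p.choose d ≤ p.choose (d+1) * b := by
    calc p.choose d ≤ p.choose d * (p - d) := Nat.le_mul_of_pos_right _ (by omega)
    _ = p.choose (d+1) * (d+1) := (Nat.choose_succ_right_eq p d).symm
    _ ≤ p.choose (d+1) * b := Nat.mul_le_mul_left _ (by omega)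
  have hb0 : (0:ℝ) ≤ (b:ℝ)^d := by positivity
  calc ((p.choose d : ℝ)) * (b:ℝ)^d ≤ ((p.choose (d+1) * b : ℕ) : ℝ) * (b:ℝ)^d := by
        apply mul_le_mul_of_nonneg_right _ hb0
        exact_mod_cast hnat
  _ = (p.choose (d+1)) * (b:ℝ)^(d+1) := by push_cast; ring

lemma csum_bounds {b p : ℕ} (hpb : p ≤ b) :
    ∀ d, d < p → 0 ≤ csum (b:ℝ) p d ∧ csum (b:ℝ) p d ≤ (p.choose d) * (b:ℝ)^d := by
  intro d
  induction d with
  | zero => intro _; rw [csum_zero]; norm_num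
  | succ d ih =>
    intro hd
    obtain ⟨h0, h1⟩ := ih (by omega)
    rw [csum_succ]
    constructor
    · have := choose_cast_le (show d < p by omega) hpb
      linarith
    · linarith

lemma csum_mono {b p : ℕ} (hpb : p ≤ b) {d : ℕ} (hd : d + 2 ≤ p) :
    csum (b:ℝ) p d ≤ csum (b:ℝ) p (d+1) := by
  obtain ⟨h0, h1⟩ := csum_bounds hpb d (by omega)
  rw [csum_succ]
  -- need 2 * csum d ≤ C(p,d+1) b^(d+1); csum d ≤ C(p,d) b^d, and 2 C(p,d) b^d ≤ C(p,d+1) b^(d+1)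
  have hnat : 2 * p.choose d ≤ p.choose (d+1) * b := by
    calc 2 * p.choose d ≤ p.choose d * (p - d) := by
          rw [mul_comm]; exact Nat.mul_le_mul_left _ (by omega)
    _ = p.choose (d+1) * (d+1) := by rw [Nat.choose_succ_right_eq]
    _ ≤ p.choose (d+1) * b := Nat.mul_le_mul_left _ (by omega)
  have hb0 : (0:ℝ) ≤ (b:ℝ)^d := by positivity
  have h2 : 2 * ((p.choose d : ℝ) * (b:ℝ)^d) ≤ (p.choose (d+1)) * (b:ℝ)^(d+1) := by
    calc 2 * ((p.choose d : ℝ) * (b:ℝ)^d) = ((2 * p.choose d : ℕ):ℝ) * (b:ℝ)^d := by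
          push_cast; ring
    _ ≤ ((p.choose (d+1) * b : ℕ):ℝ) * (b:ℝ)^d := by
          apply mul_le_mul_of_nonneg_right _ hb0; exact_mod_cast hnat
    _ = (p.choose (d+1)) * (b:ℝ)^(d+1) := by push_cast; ring
  linarith

lemma csum_mono' {b p : ℕ} (hpb : p ≤ b) :
    ∀ f, f ≤ p - 1 → ∀ e, e ≤ f → csum (b:ℝ) p e ≤ csum (b:ℝ) p f := by
  intro f
  induction f with
  | zero => intro _ e he; interval_cases e; rfl
  | succ f ih =>
    intro hf e he
    rcases Nat.eq_or_lt_of_le he with h | h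
    · rw [h]
    · exact le_trans (ih (by omega) e (by omega)) (csum_mono hpb (by omega))

lemma csum_top (b : ℝ) (p : ℕ) : csum b p p = (b - 1)^p := by
  rw [sub_pow, csum]
  apply sum_congr rfl
  intro j hj
  rw [show j + p = p + j by omega]
  ring

lemma csum_pred {b : ℝ} (p : ℕ) (hp : 1 ≤ p) : csum b p (p-1) = b^p - (b-1)^p := by
  have h := csum_succ b p (p-1)
  rw [show p - 1 + 1 = p by omega, csum_top, Nat.choose_self] at h
  push_cast at h
  linarith

/-- the tail sum `Q(p,d) = ∑_{d≤t≤p} (-1)^{p+t} C(p,t) b^t`. -/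
def Qsum (b : ℝ) (p d : ℕ) : ℝ :=
  ∑ t ∈ range (p+1), if d ≤ t then (-1)^(p+t) * (p.choose t) * b^t else 0

lemma pow_lt_pow_left_nat {b p : ℕ} (hb : 1 ≤ b) (hp : 1 ≤ p) :
    ((b:ℝ) - 1)^p + 1 ≤ (b:ℝ)^p := by
  have h1 : ((b:ℝ) - 1) = ((b - 1 : ℕ) : ℝ) := by
    push_cast [Nat.cast_sub hb]; ring
  have h2 : (b-1)^p + 1 ≤ b^p := by
    have := Nat.pow_lt_pow_left (show b - 1 < b by omega) (show p ≠ 0 by omega)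
    omega
  rw [h1]
  exact_mod_cast h2

lemma Qsum_le {b p d : ℕ} (hb : 2 ≤ b) (hd : 1 ≤ d) (hpb : 2 ≤ d → p ≤ b) :
    Qsum (b:ℝ) p d ≤ (b:ℝ)^p := by
  rcases le_or_gt d p with hdp | hdp
  swap
  · -- d > p : Qsum = 0
    have : Qsum (b:ℝ) p d = 0 := by
      rw [Qsum]
      apply sum_eq_zero
      intro t ht
      rw [if_neg]
      rw [mem_range] at ht; omega
    rw [this]; positivity
  -- d ≤ p : Qsum = (b-1)^p + (-1)^(p+d) csum (d-1)
  have hsplit : Qsum (b:ℝ) p d = ((b:ℝ)-1)^p + (-1)^(p+d) * csum (b:ℝ) p (d-1) := by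
    have hfull : ((b:ℝ)-1)^p = ∑ t ∈ range (p+1), (-1)^(p+t) * (p.choose t) * (b:ℝ)^t := by
      rw [sub_pow]
      apply sum_congr rfl
      intro j _
      rw [show j + p = p + j by omega]; ring
    have hdecomp : (∑ t ∈ range (p+1), (-1:ℝ)^(p+t) * (p.choose t) * (b:ℝ)^t)
        = Qsum (b:ℝ) p d + ∑ t ∈ range d, (-1:ℝ)^(p+t) * (p.choose t) * (b:ℝ)^t := by
      rw [Qsum, ← sum_filter]
      rw [← Finset.sum_filter_add_sum_filter_not (range (p+1)) (fun t => d ≤ t)]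
      congr 1
      congr 1
      · ext t
        simp only [mem_filter, mem_range, not_le]
        omega
    have hhead : ∑ t ∈ range d, (-1:ℝ)^(p+t) * (p.choose t) * (b:ℝ)^t
        = (-1:ℝ)^(p+d+1) * csum (b:ℝ) p (d-1) := by
      rw [csum, mul_sum, show d - 1 + 1 = d by omega]
      apply sum_congr rfl
      intro t _
      have : (-1:ℝ)^(p+d+1) * (-1)^(d-1+t) = (-1)^(p+t) := by
        rw [← pow_add, show p+d+1+(d-1+t) = p+t+2*d by omega, pow_add, pow_mul]
        norm_num
      rw [← mul_assoc, ← mul_assoc, this]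
    have hsign : (-1:ℝ)^(p+d) = -(-1:ℝ)^(p+d+1) := by
      rw [pow_succ]; ring
    rw [hfull, hdecomp, hhead] at *
    rw [hsign]
    ring
  rw [hsplit]
  rcases Nat.even_or_odd (p+d) with hev | hod
  · -- even: (b-1)^p + csum(d-1) ≤ b^p
    rw [hev.neg_one_pow, one_mul]
    rcases Nat.eq_or_lt_of_le hd with h1 | h2
    · -- d = 1 : csum 0 = 1
      rw [← h1]
      norm_num [csum_zero]
      exact pow_lt_pow_left_nat (by omega) (by omega)
    · -- d ≥ 2, so p ≤ b
      have hpb' := hpb (by omega)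
      have h3 : csum (b:ℝ) p (d-1) ≤ csum (b:ℝ) p (p-1) :=
        csum_mono' hpb' (p-1) le_rfl (d-1) (by omega)
      rw [csum_pred p (by omega)] at h3
      linarith
  · -- odd: (b-1)^p - csum(d-1) ≤ (b-1)^p ≤ b^p
    rw [hod.neg_one_pow]
    have h0 : 0 ≤ csum (b:ℝ) p (d-1) := by
      rcases Nat.eq_or_lt_of_le hd with h1 | h2
      · rw [← h1]; rw [csum_zero]; norm_num
      · exact (csum_bounds (hpb (by omega)) (d-1) (by omega)).1
    have hb' : (2:ℝ) ≤ (b:ℝ) := by exact_mod_cast hb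
    have h1 : ((b:ℝ)-1)^p ≤ (b:ℝ)^p := by
      apply pow_le_pow_left₀ (by linarith) (by linarith)
    linarith

/-- `T(r,d) = ∑_w C(r,w) (-1)^{r+w} b^{w + (d∸w)}`. -/
def Tsum (b : ℝ) (r d : ℕ) : ℝ :=
  ∑ w ∈ range (r+1), (r.choose w) * (-1)^(r+w) * b^(w + (d - w))

lemma Tsum_d_zero (b : ℝ) (r : ℕ) : Tsum b r 0 = (b - 1)^r := by
  rw [Tsum, sub_pow]
  apply sum_congr rfl
  intro w _
  rw [show w + (0 - w) = w by omega, show w + r = r + w by omega]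
  ring

lemma Tsum_succ_eq {d : ℕ} (b : ℝ) (r : ℕ) (hd : 1 ≤ d) :
    Tsum b (r+1) d = (b - 1) * Qsum b r d := by
  have key : Tsum b (r+1) d
      = ∑ t ∈ range (r+1), (r.choose t : ℝ) * (-1)^(r+t) *
          (b^((t+1) + (d - (t+1))) - b^(t + (d - t))) := by
    rw [Tsum, sum_range_succ']
    have hf0 : ((r+1).choose 0 : ℝ) * (-1)^(r+1+0) * b^(0 + (d - 0))
        = -((-1:ℝ)^r * b^d) := by
      rw [Nat.choose_zero_right]
      rw [show r+1+0 = r+1 by omega, pow_succ]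
      norm_num
    rw [hf0]
    have hsplit : ∀ t ∈ range (r+1),
        ((r+1).choose (t+1) : ℝ) * (-1)^(r+1+(t+1)) * b^((t+1) + (d - (t+1)))
        = (r.choose t : ℝ) * (-1)^(r+t) * b^((t+1) + (d - (t+1)))
          + (r.choose (t+1) : ℝ) * (-1)^(r+t) * b^((t+1) + (d - (t+1))) := by
      intro t _
      rw [Nat.choose_succ_succ, show r+1+(t+1) = (r+t)+2 by omega, pow_add]
      push_cast
      ring
    rw [sum_congr rfl hsplit, sum_add_distrib]
    -- second piece: ∑_{t∈range(r+1)} C(r,t+1)(-1)^{r+t} b^{(t+1)+(d-(t+1))}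
    have hA : ∑ t ∈ range (r+1), (r.choose (t+1) : ℝ) * (-1)^(r+t) * b^((t+1) + (d - (t+1)))
        = -(∑ w ∈ range (r+1), (r.choose w : ℝ) * (-1)^(r+w) * b^(w + (d - w)))
          + (-1)^r * b^d := by
      rw [sum_range_succ' (fun w => (r.choose w : ℝ) * (-1)^(r+w) * b^(w + (d - w))) r]
      rw [neg_add, ← Finset.sum_neg_distrib]
      rw [sum_range_succ]
      rw [Nat.choose_succ_self]
      push_cast
      rw [Nat.choose_zero_right]
      have : ∀ t ∈ range r, (r.choose (t+1) : ℝ) * (-1)^(r+t) * b^((t+1) + (d - (t+1)))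
          = -((r.choose (t+1) : ℝ) * (-1)^(r+(t+1)) * b^((t+1) + (d - (t+1)))) := by
        intro t _
        rw [show r+(t+1) = (r+t)+1 by omega, pow_succ]
        ring
      rw [sum_congr rfl this]
      simp only [zero_mul, mul_zero, zero_add, Nat.sub_zero, Nat.add_zero, one_mul]
      ring
    rw [hA]
    have expand : ∀ t ∈ range (r+1),
        (r.choose t : ℝ) * (-1)^(r+t) * (b^((t+1) + (d - (t+1))) - b^(t + (d - t)))
        = (r.choose t : ℝ) * (-1)^(r+t) * b^((t+1) + (d - (t+1)))
          - (r.choose t : ℝ) * (-1)^(r+t) * b^(t + (d - t)) := by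
      intro t _; ring
    rw [sum_congr rfl expand, Finset.sum_sub_distrib]
    ring
  rw [key, Qsum, mul_sum]
  apply sum_congr rfl
  intro t _
  rcases le_or_gt d (t) with h | h
  · rw [if_pos h, show (t+1) + (d - (t+1)) = t + 1 by omega, show t + (d - t) = t by omega,
      pow_succ]
    ring
  · rw [if_neg (by omega), show (t+1) + (d - (t+1)) = d by omega, show t + (d - t) = d by omega]
    ring

lemma Tsum_le {b r d : ℕ} (hb : 2 ≤ b) (hr : 1 ≤ r) (hcond : 2 ≤ d → r ≤ b + 1) :
    Tsum (b:ℝ) r d ≤ ((b:ℝ) - 1) * (b:ℝ)^(r-1) := by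
  have hb' : (2:ℝ) ≤ (b:ℝ) := by exact_mod_cast hb
  rcases Nat.eq_zero_or_pos d with rfl | hd
  · rw [Tsum_d_zero]
    have : ((b:ℝ)-1)^r = ((b:ℝ)-1) * ((b:ℝ)-1)^(r-1) := by
      rw [← pow_succ', show r - 1 + 1 = r by omega]
    rw [this]
    apply mul_le_mul_of_nonneg_left _ (by linarith)
    apply pow_le_pow_left₀ (by linarith) (by linarith)
  · obtain ⟨r', rfl⟩ : ∃ r', r = r' + 1 := ⟨r - 1, by omega⟩
    rw [Tsum_succ_eq _ _ hd]
    have hq := Qsum_le (b := b) (p := r') (d := d) hb hd (fun h2 => by have := hcond h2; omega)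
    have : (0:ℝ) ≤ (b:ℝ) - 1 := by linarith
    simpa using mul_le_mul_of_nonneg_left hq this


/-- value of the first `L` digits: `nval b a L = ∑_{i<L} a i b^{L-1-i}`, Horner style. -/
def nval (b : ℕ) (a : ℕ → ℕ) : ℕ → ℕ
  | 0 => 0
  | (L+1) => nval b a L * b + a L

lemma geo_sum {b : ℕ} (hb : 1 ≤ b) (M : ℕ) :
    ∑ i ∈ range M, ((b:ℝ)-1)/(b:ℝ)^(i+1) = 1 - 1/(b:ℝ)^M := by
  have hbne : (b:ℝ) ≠ 0 := by
    have : (1:ℝ) ≤ b := by exact_mod_cast hb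
    linarith
  induction M with
  | zero => simp
  | succ M ih =>
    rw [sum_range_succ, ih]
    field_simp
    ring

lemma tail_lt_one {b : ℕ} (hb : 1 ≤ b) {a : ℕ → ℕ} (ha : ∀ i, a i < b) (M : ℕ) :
    (0:ℝ) ≤ ∑ i ∈ range M, (a i : ℝ)/(b:ℝ)^(i+1) ∧
    ∑ i ∈ range M, (a i : ℝ)/(b:ℝ)^(i+1) < 1 := by
  have hb0 : (0:ℝ) < (b:ℝ) := by exact_mod_cast hb
  constructor
  · apply sum_nonneg; intro i _; positivity
  · have hle : ∑ i ∈ range M, (a i : ℝ)/(b:ℝ)^(i+1)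
        ≤ ∑ i ∈ range M, ((b:ℝ)-1)/(b:ℝ)^(i+1) := by
      apply sum_le_sum
      intro i _
      apply div_le_div_of_nonneg_right _ (by positivity)
      have := ha i
      have h1 : (a i : ℝ) + 1 ≤ (b:ℝ) := by exact_mod_cast this
      linarith
    rw [geo_sum hb M] at hle
    have : (0:ℝ) < 1/(b:ℝ)^M := by positivity
    linarith

/-- the base-`b` expansion identity. -/
lemma pow_mul_expansion {b n : ℕ} (hb : 1 ≤ b) (a : ℕ → ℕ) :
    ∀ l, l ≤ n →
      (b:ℝ)^l * (∑ i ∈ range n, (a i : ℝ)/(b:ℝ)^(i+1))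
        = (nval b a l : ℝ) + ∑ i ∈ range (n-l), (a (l+i) : ℝ)/(b:ℝ)^(i+1) := by
  intro l
  induction l with
  | zero => intro _; simp [nval]
  | succ l ih =>
    intro hl
    have hb0 : (b:ℝ) ≠ 0 := by
      have : (1:ℝ) ≤ (b:ℝ) := by exact_mod_cast hb
      linarith
    have h1 : (b:ℝ)^(l+1) * (∑ i ∈ range n, (a i : ℝ)/(b:ℝ)^(i+1))
        = (b:ℝ) * ((b:ℝ)^l * (∑ i ∈ range n, (a i : ℝ)/(b:ℝ)^(i+1))) := by ring
    rw [h1, ih (by omega)]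
    have h2 : n - l = (n - (l+1)) + 1 := by omega
    rw [h2, sum_range_succ' (fun i => (a (l+i) : ℝ)/(b:ℝ)^(i+1)) (n - (l+1)), nval]
    push_cast
    rw [mul_add, mul_add, mul_sum]
    have e1 : ∀ k ∈ range (n-(l+1)), (b:ℝ) * ((a (l+(k+1)):ℝ)/(b:ℝ)^(k+1+1))
        = (a ((l+1)+k):ℝ)/(b:ℝ)^(k+1) := by
      intro k _
      rw [show l+(k+1) = (l+1)+k by omega, pow_succ]
      field_simp
    rw [sum_congr rfl e1]
    have e2 : (b:ℝ) * ((a (l+0):ℝ)/(b:ℝ)^(0+1)) = (a l : ℝ) := by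
      rw [Nat.add_zero, pow_one]
      field_simp
    rw [e2]
    ring

lemma floor_pow_mul {b n : ℕ} (hb : 1 ≤ b) {a : ℕ → ℕ} (ha : ∀ i, a i < b)
    {l : ℕ} (hl : l ≤ n) :
    ⌊(b:ℝ)^l * (∑ i ∈ range n, (a i : ℝ)/(b:ℝ)^(i+1))⌋ = (nval b a l : ℤ) := by
  rw [pow_mul_expansion hb a l hl]
  obtain ⟨h0, h1⟩ := tail_lt_one hb (a := fun i => a (l+i)) (fun i => ha (l+i)) (n-l)
  have : ((nval b a l : ℤ) : ℝ) = (nval b a l : ℝ) := by push_cast; ring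
  rw [← this, Int.floor_intCast_add]
  rw [Int.floor_eq_zero_iff.mpr ⟨h0, h1⟩, add_zero]

lemma floor_pow_mul_ge {b n : ℕ} (hb : 1 ≤ b) {a : ℕ → ℕ} (ha : ∀ i, a i < b)
    {l : ℕ} (hl : n ≤ l) :
    ⌊(b:ℝ)^l * (∑ i ∈ range n, (a i : ℝ)/(b:ℝ)^(i+1))⌋ = ((b^(l-n) * nval b a n : ℕ) : ℤ) := by
  have hx : (∑ i ∈ range n, (a i : ℝ)/(b:ℝ)^(i+1)) * (b:ℝ)^n = (nval b a n : ℝ) := by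
    have := pow_mul_expansion (b := b) (n := n) hb a n le_rfl
    simp only [Nat.sub_self, range_zero, sum_empty, add_zero] at this
    rw [← this]; ring
  have h2 : (b:ℝ)^l * (∑ i ∈ range n, (a i : ℝ)/(b:ℝ)^(i+1))
      = ((b^(l-n) * nval b a n : ℕ) : ℝ) := by
    have h3 : (b:ℝ)^l = (b:ℝ)^(l-n) * (b:ℝ)^n := by
      rw [← pow_add, show l - n + n = l by omega]
    calc (b:ℝ)^l * (∑ i ∈ range n, (a i : ℝ)/(b:ℝ)^(i+1))
        = (b:ℝ)^(l-n) * ((∑ i ∈ range n, (a i : ℝ)/(b:ℝ)^(i+1)) * (b:ℝ)^n) := by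
          rw [h3]; ring
    _ = (b:ℝ)^(l-n) * (nval b a n : ℝ) := by rw [hx]
    _ = ((b^(l-n) * nval b a n : ℕ) : ℝ) := by push_cast; ring
  rw [h2, Int.floor_natCast]

lemma nval_inj {b : ℕ} {a a' : ℕ → ℕ} (ha : ∀ i, a i < b) (ha' : ∀ i, a' i < b) :
    ∀ L, nval b a L = nval b a' L → ∀ i, i < L → a i = a' i := by
  intro L
  induction L with
  | zero => intro _ i hi; omega
  | succ L ih =>
    intro heq i hi
    have hb : 0 < b := by have := ha 0; omega
    rw [nval, nval] at heq
    have h1 : (nval b a L * b + a L) % b = a L := by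
      rw [add_comm, Nat.add_mul_mod_self_right, Nat.mod_eq_of_lt (ha L)]
    have h2 : (nval b a' L * b + a' L) % b = a' L := by
      rw [add_comm, Nat.add_mul_mod_self_right, Nat.mod_eq_of_lt (ha' L)]
    have hL : a L = a' L := by rw [← h1, ← h2, heq]
    have h3 : nval b a L = nval b a' L := by
      have : nval b a L * b = nval b a' L * b := by omega
      exact Nat.eq_of_mul_eq_mul_right hb this
    rcases Nat.lt_succ_iff_lt_or_eq.mp hi with h | h
    · exact ih h3 i h
    · rw [h]; exact hL

lemma nval_congr {b : ℕ} {a a' : ℕ → ℕ} :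
    ∀ L, (∀ i, i < L → a i = a' i) → nval b a L = nval b a' L := by
  intro L
  induction L with
  | zero => intro _; rfl
  | succ L ih =>
    intro h
    rw [nval, nval, ih (fun i hi => h i (by omega)), h L (by omega)]

/-- MAIN characterization: floors agree iff the first `min l n` digits agree. -/
lemma floor_eq_iff_digits {b n : ℕ} (hb : 1 ≤ b) {a a' : ℕ → ℕ}
    (ha : ∀ i, a i < b) (ha' : ∀ i, a' i < b) (l : ℕ) :
    (⌊(b:ℝ)^l * (∑ i ∈ range n, (a i : ℝ)/(b:ℝ)^(i+1))⌋
      = ⌊(b:ℝ)^l * (∑ i ∈ range n, (a' i : ℝ)/(b:ℝ)^(i+1))⌋)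
    ↔ ∀ i, i < min l n → a i = a' i := by
  rcases le_or_gt l n with hl | hl
  · rw [floor_pow_mul hb ha hl, floor_pow_mul hb ha' hl]
    rw [Nat.min_eq_left hl]
    constructor
    · intro h
      exact nval_inj ha ha' l (by exact_mod_cast h)
    · intro h
      exact_mod_cast nval_congr l h
  · rw [floor_pow_mul_ge hb ha (le_of_lt hl), floor_pow_mul_ge hb ha' (le_of_lt hl)]
    rw [Nat.min_eq_right (le_of_lt hl)]
    have hbp : 0 < b^(l-n) := Nat.pow_pos (by omega)
    constructor
    · intro h
      have : nval b a n = nval b a' n := by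
        have h' : b^(l-n) * nval b a n = b^(l-n) * nval b a' n := by exact_mod_cast h
        exact Nat.eq_of_mul_eq_mul_left hbp h'
      exact nval_inj ha ha' n this
    · intro h
      rw [nval_congr n h]


open scoped Classical in
/-- number of solutions of a full-row-rank linear system over a finite field. -/
lemma card_fiber_of_full_rank {F : Type} [Field F] [Fintype F] {ι : Type} [Fintype ι]
    {m : ℕ} (M : Matrix ι (Fin m) F) (hrank : M.rank = Fintype.card ι) (w : ι → F) :
    (univ.filter fun y : (Fin m → F) => M.mulVec y = w).card
      = Fintype.card F ^ (m - Fintype.card ι) := by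
  classical
  set f := M.mulVecLin with hf
  have hrange : LinearMap.range f = ⊤ := by
    apply Submodule.eq_top_of_finrank_eq
    rw [← Matrix.rank, hrank, Module.finrank_pi]
  have hsurj : Function.Surjective f := LinearMap.range_eq_top.mp hrange
  obtain ⟨y₀, hy₀⟩ := hsurj w
  have hker : Module.finrank F (LinearMap.ker f) = m - Fintype.card ι := by
    have h1 := LinearMap.finrank_range_add_finrank_ker f
    rw [Module.finrank_pi] at h1
    simp only [Fintype.card_fin] at h1
    have h2 : Module.finrank F (LinearMap.range f) = Fintype.card ι := by
      rw [← Matrix.rank, hrank]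
    omega
  -- the fiber is in bijection with the kernel
  have hbij : (univ.filter fun y : (Fin m → F) => M.mulVec y = w).card
      = Fintype.card (LinearMap.ker f) := by
    rw [← Fintype.card_coe]
    apply Fintype.card_congr
    refine ⟨fun y => ⟨y.1 - y₀, ?_⟩, fun z => ⟨z.1 + y₀, ?_⟩, ?_, ?_⟩
    · have hy := y.2
      simp only [mem_filter, mem_univ, true_and] at hy
      rw [LinearMap.mem_ker, map_sub, hy₀]
      rw [← Matrix.mulVecLin_apply] at hy
      rw [hy, sub_self]
    · have hz := z.2
      rw [LinearMap.mem_ker] at hz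
      simp only [mem_coe, mem_filter, mem_univ, true_and]
      rw [← Matrix.mulVecLin_apply, map_add, hz, zero_add, hy₀]
    · intro y; ext; simp
    · intro z; ext; simp
  rw [hbij, Module.card_eq_pow_finrank (K := F), hker]

/-- reduce a vector to achieve a given smaller sum over `u`. -/
lemma exists_reduce {ι : Type} [DecidableEq ι] (u : Finset ι) :
    ∀ N (g : ι → ℕ), ∑ j ∈ u, g j = N → ∀ M, M ≤ N →
      ∃ g' : ι → ℕ, (∀ j, g' j ≤ g j) ∧ ∑ j ∈ u, g' j = M := by
  intro N
  induction N with
  | zero =>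
    intro g hg M hM
    exact ⟨g, fun j => le_rfl, by omega⟩
  | succ N ih =>
    intro g hg M hM
    rcases Nat.eq_or_lt_of_le hM with h | h
    · exact ⟨g, fun j => le_rfl, by omega⟩
    · have hex : ∃ j₀ ∈ u, 0 < g j₀ := by
        by_contra hc
        push_neg at hc
        have : ∑ j ∈ u, g j = 0 := sum_eq_zero (fun j hj => by have := hc j hj; omega)
        omega
      obtain ⟨j₀, hj₀, hg0⟩ := hex
      set g₂ := Function.update g j₀ (g j₀ - 1) with hg₂
      have hsum2 : ∑ j ∈ u, g₂ j = N := by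
        rw [hg₂, Finset.sum_update_of_mem hj₀]
        rw [← Finset.sum_erase_add u g hj₀] at hg
        rw [Finset.sdiff_singleton_eq_erase]
        omega
      obtain ⟨g', hg'le, hg'sum⟩ := ih g₂ hsum2 M (by omega)
      refine ⟨g', fun j => le_trans (hg'le j) ?_, hg'sum⟩
      rw [hg₂]
      rcases eq_or_ne j j₀ with rfl | hne
      · rw [Function.update_self]; omega
      · rw [Function.update_of_ne hne]


variable {F : Type} [Field F] [Fintype F] {s m : ℕ}


variable {F : Type} [Field F] [Fintype F] {s m : ℕ} (φ : Fin (Fintype.card F) ≃ F)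
  (C : Fin s → ℕ → Fin m → F) (n : ℕ)

/-- the `i`-th digit of coordinate `j` of net point number `h`. -/
def dig (j : Fin s) (h i : ℕ) : ℕ :=
  fromF φ (∑ c, C j i c * toF φ (ndigit (Fintype.card F) h (c : ℕ)))

lemma dnet_eq_digsum (h : ℕ) (j : Fin s) :
    dnet φ C n h j = ∑ i ∈ range n, (dig φ C j h i : ℝ)/(Fintype.card F : ℝ)^(i+1) := rfl

lemma dig_lt (j : Fin s) (h i : ℕ) : dig φ C j h i < Fintype.card F :=
  (φ.symm _).isLt

lemma fromF_injective {x y : F} (h : fromF φ x = fromF φ y) : x = y := by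
  have : φ.symm x = φ.symm y := Fin.ext h
  exact φ.symm.injective this

/-- the field-coefficient vector of point number `h`. -/
def yvec (h : Fin (Fintype.card F ^ m)) : Fin m → F :=
  fun c => φ (finFunctionFinEquiv.symm h c)

lemma toF_ndigit (h : Fin (Fintype.card F ^ m)) (c : Fin m) :
    toF φ (ndigit (Fintype.card F) (h : ℕ) (c : ℕ)) = yvec φ h c := by
  apply congrArg φ
  apply Fin.ext
  simp [toF, ndigit, yvec, Nat.mod_mod_of_dvd]

lemma dig_eq_iff (h h' : Fin (Fintype.card F ^ m)) (j : Fin s) (i : ℕ) :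
    dig φ C j (h:ℕ) i = dig φ C j (h':ℕ) i
      ↔ ∑ c, C j i c * yvec φ h c = ∑ c, C j i c * yvec φ h' c := by
  unfold dig
  constructor
  · intro hd
    have := fromF_injective φ hd
    simpa only [toF_ndigit] using this
  · intro hd
    apply congrArg (fromF φ)
    simpa only [toF_ndigit] using hd

/-- exact cell count: `∑_{j∈u} l j ≤ m`. -/
lemma count_cell_exact (hnet : IsDigitalTNet C n 0) (u : Finset (Fin s)) (l : Fin s → ℕ)
    (hl : ∀ j, l j ≤ n) (hsum : ∑ j ∈ u, l j ≤ m) (h₀ : Fin (Fintype.card F ^ m)) :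
    (univ.filter fun h : Fin (Fintype.card F ^ m) =>
        ∀ j ∈ u, ∀ i, i < l j → dig φ C j h i = dig φ C j h₀ i).card
      = Fintype.card F ^ (m - ∑ j ∈ u, l j) := by
  set M := Cuk C n u l with hM
  have hcardI : Fintype.card ((j : Fin s) × Fin (min (if j ∈ u then l j else 0) n))
      = ∑ j ∈ u, l j := by
    rw [Fintype.card_sigma]
    have h1 : ∀ j : Fin s, Fintype.card (Fin (min (if j ∈ u then l j else 0) n))
        = if j ∈ u then l j else 0 := by
      intro j
      rw [Fintype.card_fin]
      split_ifs with hj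
      · exact Nat.min_eq_left (hl j)
      · exact Nat.zero_min n
    simp_rw [h1]
    rw [Finset.sum_ite_mem, Finset.univ_inter]
  have hrank : M.rank = Fintype.card ((j : Fin s) × Fin (min (if j ∈ u then l j else 0) n)) := by
    rw [hcardI, hM]
    exact hnet u l (by omega)
  have hcond : ∀ h : Fin (Fintype.card F ^ m),
      (∀ j ∈ u, ∀ i, i < l j → dig φ C j h i = dig φ C j h₀ i)
        ↔ M.mulVec (yvec φ h) = M.mulVec (yvec φ h₀) := by
    intro h
    constructor
    · intro hc
      funext p
      obtain ⟨j, i⟩ := p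
      obtain ⟨iv, hiv⟩ := i
      by_cases hj : j ∈ u
      · have h2 : ((if j ∈ u then l j else 0) ⊓ n) ≤ l j := by
          rw [if_pos hj]; exact min_le_left _ _
        have hil : iv < l j := lt_of_lt_of_le hiv h2
        have := (dig_eq_iff φ C h h₀ j iv).mp (hc j hj iv hil)
        simpa [Matrix.mulVec, dotProduct, hM, Cuk] using this
      · exfalso
        have h2 : ((if j ∈ u then l j else 0) ⊓ n) = 0 := by
          rw [if_neg hj]; exact Nat.zero_min n
        exact Nat.not_lt_zero iv (by rw [h2] at hiv; exact hiv)
    · intro hc j hj i hil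
      have hlt : i < min (if j ∈ u then l j else 0) n := by
        rw [if_pos hj]
        have := hl j
        omega
      have := congrFun hc ⟨j, ⟨i, hlt⟩⟩
      apply (dig_eq_iff φ C h h₀ j i).mpr
      simpa [Matrix.mulVec, dotProduct, hM, Cuk] using this
  have hcard : (univ.filter fun h : Fin (Fintype.card F ^ m) =>
      ∀ j ∈ u, ∀ i, i < l j → dig φ C j h i = dig φ C j h₀ i).card
      = (univ.filter fun y : (Fin m → F) => M.mulVec y = M.mulVec (yvec φ h₀)).card := by
    apply Finset.card_equiv (finFunctionFinEquiv.symm.trans (Equiv.piCongrRight fun _ => φ))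
    intro h
    simp only [mem_filter, mem_univ, true_and]
    have : (finFunctionFinEquiv.symm.trans (Equiv.piCongrRight fun _ => φ)) h = yvec φ h := by
      funext c; rfl
    rw [this, hcond h]
  rw [hcard, card_fiber_of_full_rank M hrank _, hcardI]

/-- general cell count with truncated subtraction. -/
lemma count_cell (hnet : IsDigitalTNet C n 0) (u : Finset (Fin s)) (l : Fin s → ℕ)
    (hl : ∀ j, l j ≤ n) (h₀ : Fin (Fintype.card F ^ m)) :
    (univ.filter fun h : Fin (Fintype.card F ^ m) =>
        ∀ j ∈ u, ∀ i, i < l j → dig φ C j h i = dig φ C j h₀ i).card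
      = Fintype.card F ^ (m - ∑ j ∈ u, l j) := by
  rcases le_or_gt (∑ j ∈ u, l j) m with hsum | hsum
  · exact count_cell_exact φ C n hnet u l hl hsum h₀
  · -- saturated case: the count is 1
    obtain ⟨l', hle, hsum'⟩ := exists_reduce u (∑ j ∈ u, l j) l rfl m (le_of_lt hsum)
    have hsub : (univ.filter fun h : Fin (Fintype.card F ^ m) =>
          ∀ j ∈ u, ∀ i, i < l j → dig φ C j h i = dig φ C j h₀ i)
        ⊆ (univ.filter fun h : Fin (Fintype.card F ^ m) =>
          ∀ j ∈ u, ∀ i, i < l' j → dig φ C j h i = dig φ C j h₀ i) := by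
      intro h hh
      simp only [mem_filter, mem_univ, true_and] at hh ⊢
      intro j hj i hi
      exact hh j hj i (by have := hle j; omega)
    have hcard' := count_cell_exact φ C n hnet u l' (fun j => le_trans (hle j) (hl j))
      (le_of_eq hsum') h₀
    rw [hsum', Nat.sub_self, pow_zero] at hcard'
    have hle1 : (univ.filter fun h : Fin (Fintype.card F ^ m) =>
          ∀ j ∈ u, ∀ i, i < l j → dig φ C j h i = dig φ C j h₀ i).card ≤ 1 := by
      rw [← hcard']
      exact Finset.card_le_card hsub
    have hge1 : 0 < (univ.filter fun h : Fin (Fintype.card F ^ m) =>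
          ∀ j ∈ u, ∀ i, i < l j → dig φ C j h i = dig φ C j h₀ i).card := by
      rw [Finset.card_pos]
      exact ⟨h₀, by simp⟩
    rw [Nat.sub_eq_zero_of_le (le_of_lt hsum), pow_zero]
    omega

lemma mulVec_inj_of_rank {F : Type} [Field F] [Fintype F] {ι : Type} [Fintype ι] {m : ℕ}
    (M : Matrix ι (Fin m) F) (hrank : M.rank = m) :
    ∀ y : Fin m → F, M.mulVec y = 0 → y = 0 := by
  intro y hy
  have h1 := LinearMap.finrank_range_add_finrank_ker M.mulVecLin
  rw [Module.finrank_pi] at h1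
  simp only [Fintype.card_fin] at h1
  have h2 : Module.finrank F (LinearMap.range M.mulVecLin) = m := by
    rw [← Matrix.rank, hrank]
  have h3 : Module.finrank F (LinearMap.ker M.mulVecLin) = 0 := by omega
  have h4 : LinearMap.ker M.mulVecLin = ⊥ := Submodule.finrank_eq_zero.mp h3
  have h5 : y ∈ LinearMap.ker M.mulVecLin := by
    rw [LinearMap.mem_ker, Matrix.mulVecLin_apply, hy]
  rw [h4, Submodule.mem_bot] at h5
  exact h5

lemma mulVec_surj_of_rank {F : Type} [Field F] [Fintype F] {ι : Type} [Fintype ι] {m : ℕ}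
    (M : Matrix ι (Fin m) F) (hrank : M.rank = Fintype.card ι) :
    Function.Surjective M.mulVec := by
  have hrange : LinearMap.range M.mulVecLin = ⊤ := by
    apply Submodule.eq_top_of_finrank_eq
    rw [← Matrix.rank, hrank, Module.finrank_pi]
  intro w
  obtain ⟨y, hy⟩ := LinearMap.range_eq_top.mp hrange w
  exact ⟨y, by rw [← Matrix.mulVecLin_apply, hy]⟩

variable {F : Type} [Field F] [Fintype F] {s m : ℕ}
  (C : Fin s → ℕ → Fin m → F) (n : ℕ)

/-- kernel triviality from the net property, in row-equation form. -/
lemma rows_ker (hnet : IsDigitalTNet C n 0) (u : Finset (Fin s)) (k : Fin s → ℕ)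
    (hk : ∀ j, k j ≤ n) (hsum : ∑ j ∈ u, k j = m) (y : Fin m → F)
    (hy : ∀ j ∈ u, ∀ i, i < k j → ∑ c, C j i c * y c = 0) : y = 0 := by
  have hrank : (Cuk C n u k).rank = m := by rw [hnet u k (by omega), hsum]
  apply mulVec_inj_of_rank _ hrank
  funext p
  obtain ⟨j, i⟩ := p
  obtain ⟨iv, hiv⟩ := i
  by_cases hj : j ∈ u
  · have h2 : ((if j ∈ u then k j else 0) ⊓ n) ≤ k j := by
      rw [if_pos hj]; exact min_le_left _ _
    have hil : iv < k j := lt_of_lt_of_le hiv h2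
    have := hy j hj iv hil
    simpa [Matrix.mulVec, dotProduct, Cuk] using this
  · exfalso
    have h2 : ((if j ∈ u then k j else 0) ⊓ n) = 0 := by
      rw [if_neg hj]; exact Nat.zero_min n
    exact Nat.not_lt_zero iv (by rw [h2] at hiv; exact hiv)

/-- existence of dual vectors to the first `m` rows of a single generating matrix. -/
lemma dual_exists (hnet : IsDigitalTNet C n 0) (hn : m ≤ n) (j₀ : Fin s) (t : ℕ) :
    ∃ d : Fin m → F, ∀ i, i < m → ∑ c, C j₀ i c * d c = if i = t then 1 else 0 := by
  set u : Finset (Fin s) := {j₀} with hu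
  set k : Fin s → ℕ := fun _ => m with hk
  have hsum : ∑ j ∈ u, k j = m := by simp [hu, hk]
  have hrank : (Cuk C n u k).rank = Fintype.card ((j : Fin s) × Fin (min (if j ∈ u then k j else 0) n)) := by
    rw [hnet u k (by omega), hsum]
    rw [Fintype.card_sigma]
    have h1 : ∀ j : Fin s, Fintype.card (Fin (min (if j ∈ u then k j else 0) n))
        = if j ∈ u then m else 0 := by
      intro j
      rw [Fintype.card_fin]
      split_ifs with hj
      · exact Nat.min_eq_left hn
      · exact Nat.zero_min n
    simp_rw [h1]
    rw [Finset.sum_ite_mem, Finset.univ_inter]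
    simp [hu]
  obtain ⟨d, hd⟩ := mulVec_surj_of_rank _ hrank
    (fun p => if (p.2 : ℕ) = t then 1 else 0)
  refine ⟨d, fun i hi => ?_⟩
  have hmem : j₀ ∈ u := by simp [hu]
  have hlt : i < min (if j₀ ∈ u then k j₀ else 0) n := by
    rw [if_pos hmem]
    simp only [hk]
    omega
  have := congrFun hd ⟨j₀, ⟨i, hlt⟩⟩
  simpa [Matrix.mulVec, dotProduct, Cuk] using this

/-- a digital (0,m,s)-net with m ≥ 2 forces `s ≤ b + 1`. -/
lemma s_le_card_add_one (hnet : IsDigitalTNet C n 0) (hn : m ≤ n) (hm : 2 ≤ m) :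
    s ≤ Fintype.card F + 1 := by
  rcases Nat.eq_zero_or_pos s with rfl | hs
  · omega
  have j₀ : Fin s := ⟨0, hs⟩
  obtain ⟨d1, hd1⟩ := dual_exists C n hnet hn j₀ (m-1)
  obtain ⟨d2, hd2⟩ := dual_exists C n hnet hn j₀ (m-2)
  set lam1 : Fin s → F := fun j => ∑ c, C j 0 c * d1 c with hlam1
  set lam2 : Fin s → F := fun j => ∑ c, C j 0 c * d2 c with hlam2
  -- Claim 1: lam1 j ≠ 0 for j ≠ j₀
  have claim1 : ∀ j : Fin s, j ≠ j₀ → lam1 j ≠ 0 := by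
    intro j hj hc
    set k : Fin s → ℕ := fun j' => if j' = j₀ then m-1 else if j' = j then 1 else 0 with hk
    have hkj₀ : k j₀ = m - 1 := by simp [hk]
    have hkj : k j = 1 := by simp [hk, hj]
    have hkle : ∀ j', k j' ≤ n := by
      intro j'
      simp only [hk]
      split_ifs <;> omega
    have hzero : d1 = 0 := by
      apply rows_ker C n hnet {j₀, j} k hkle
      · rw [Finset.sum_insert (by simp [Ne.symm hj]), Finset.sum_singleton, hkj₀, hkj]
        omega
      · intro j'' hj'' i hik
        by_cases h0 : j'' = j₀
        · subst h0
          rw [hkj₀] at hik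
          rw [hd1 i (by omega), if_neg (by omega)]
        · by_cases h1 : j'' = j
          · subst h1
            rw [hkj] at hik
            have : i = 0 := by omega
            subst this
            exact hc
          · exfalso
            have : k j'' = 0 := by simp [hk, h0, h1]
            omega
    have h1 := hd1 (m-1) (by omega)
    rw [if_pos rfl, hzero] at h1
    simp at h1
  -- Claim 2: distinct slopes
  have claim2 : ∀ j j' : Fin s, j ≠ j₀ → j' ≠ j₀ → j ≠ j' →
      lam2 j * (lam1 j)⁻¹ ≠ lam2 j' * (lam1 j')⁻¹ := by
    intro j j' hjj0 hj'j0 hjj' hc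
    have h1 := claim1 j hjj0
    have h1' := claim1 j' hj'j0
    have hcross : lam2 j * lam1 j' = lam2 j' * lam1 j := by
      field_simp at hc
      linear_combination hc
    set y : Fin m → F := fun c => lam1 j * d2 c - lam2 j * d1 c with hy
    set k : Fin s → ℕ := fun j'' => if j'' = j₀ then m-2 else
      if j'' = j then 1 else if j'' = j' then 1 else 0 with hk
    have hj0j : j₀ ≠ j := Ne.symm hjj0
    have hj0j' : j₀ ≠ j' := Ne.symm hj'j0
    have hkj₀ : k j₀ = m - 2 := by simp [hk]
    have hkj : k j = 1 := by simp [hk, hjj0]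
    have hkj' : k j' = 1 := by simp [hk, hj'j0, Ne.symm hjj']
    have hkle : ∀ j'', k j'' ≤ n := by
      intro j''
      simp only [hk]
      split_ifs <;> omega
    have expand : ∀ (jx : Fin s) (ix : ℕ), ∑ c, C jx ix c * y c
        = lam1 j * (∑ c, C jx ix c * d2 c) - lam2 j * (∑ c, C jx ix c * d1 c) := by
      intro jx ix
      have e : ∀ c ∈ (univ : Finset (Fin m)), C jx ix c * y c
          = lam1 j * (C jx ix c * d2 c) - lam2 j * (C jx ix c * d1 c) := by
        intro c _
        simp only [hy]
        ring
      rw [Finset.sum_congr rfl e, Finset.sum_sub_distrib, ← Finset.mul_sum, ← Finset.mul_sum]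
    have hzero : y = 0 := by
      apply rows_ker C n hnet {j₀, j, j'} k hkle
      · rw [Finset.sum_insert (by simp [hj0j, hj0j']),
          Finset.sum_insert (by simp [hjj']), Finset.sum_singleton, hkj₀, hkj, hkj']
        omega
      · intro j'' hj'' i hik
        by_cases h0 : j'' = j₀
        · subst h0
          rw [hkj₀] at hik
          rw [expand, hd1 i (by omega), hd2 i (by omega), if_neg (by omega), if_neg (by omega)]
          ring
        · by_cases hA : j'' = j
          · rw [hA] at hik ⊢
            rw [hkj] at hik
            have : i = 0 := by omega
            subst this
            rw [expand]
            rw [show (∑ c, C j 0 c * d2 c) = lam2 j from rfl,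
              show (∑ c, C j 0 c * d1 c) = lam1 j from rfl]
            ring
          · by_cases hB : j'' = j'
            · rw [hB] at hik ⊢
              rw [hkj'] at hik
              have : i = 0 := by omega
              subst this
              rw [expand]
              rw [show (∑ c, C j' 0 c * d2 c) = lam2 j' from rfl,
                show (∑ c, C j' 0 c * d1 c) = lam1 j' from rfl]
              linear_combination -hcross
            · exfalso
              have : k j'' = 0 := by simp [hk, h0, hA, hB]
              omega
    -- contradiction via row m-2 of C j₀
    have e1 := hd1 (m-2) (by omega)
    have e2 := hd2 (m-2) (by omega)
    rw [if_neg (by omega)] at e1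
    rw [if_pos rfl] at e2
    have hfin : ∑ c, C j₀ (m-2) c * y c = lam1 j := by
      rw [expand, e1, e2]
      ring
    rw [hzero] at hfin
    simp only [Pi.zero_apply, mul_zero, Finset.sum_const_zero] at hfin
    exact h1 hfin.symm
  -- count distinct slopes
  have hinj : Set.InjOn (fun j => lam2 j * (lam1 j)⁻¹) ((univ.erase j₀ : Finset (Fin s)) : Set (Fin s)) := by
    intro a ha b hb hab
    have ha' : a ≠ j₀ := (Finset.mem_erase.mp (Finset.mem_coe.mp ha)).1
    have hb' : b ≠ j₀ := (Finset.mem_erase.mp (Finset.mem_coe.mp hb)).1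
    by_contra hne
    exact claim2 a b ha' hb' hne hab
  have hcard := Finset.card_le_card_of_injOn (fun j => lam2 j * (lam1 j)⁻¹)
    (fun a _ => Finset.mem_univ _) hinj
  rw [Finset.card_erase_of_mem (mem_univ _), Finset.card_univ, Fintype.card_fin,
    Finset.card_univ] at hcard
  omega

lemma boole_mul_boole (A B : Prop) [Decidable A] [Decidable B] :
    (if A then (1:ℝ) else 0) * (if B then 1 else 0) = if A ∧ B then 1 else 0 := by
  by_cases hA : A <;> by_cases hB : B <;> simp [hA, hB]

lemma neg_one_pow_sub_eq {r w : ℕ} (h : w ≤ r) : (-1:ℝ)^(r-w) = (-1)^(r+w) := by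
  rw [show r + w = (r - w) + 2*w by omega, pow_add, pow_mul]
  norm_num

theorem main_bound {F : Type} [Field F] [Fintype F] {s m : ℕ}
    (φ : Fin (Fintype.card F) ≃ F)
    (C : Fin s → ℕ → Fin m → F) (n : ℕ) (hn : m ≤ n)
    (hnet : IsDigitalTNet C n 0)
    (u : Finset (Fin s)) (hu : u.Nonempty) (k : Fin s → ℕ) :
    gain (Fintype.card F) (Fintype.card F ^ m) (fun i j => dnet φ C n (i : ℕ) j) u k ≤
      ((Fintype.card F : ℝ) / ((Fintype.card F : ℝ) - 1)) ^ (s - 1) := by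
  have hb2 : 2 ≤ Fintype.card F := Fintype.one_lt_card
  have hbR : (2:ℝ) ≤ (Fintype.card F : ℝ) := by exact_mod_cast hb2
  have hbne : ((Fintype.card F : ℝ) - 1) ≠ 0 := by linarith
  set u₀ : Finset (Fin s) := u.filter (fun j => k j < n) with hu₀
  have hu₀u : u₀ ⊆ u := filter_subset _ _
  set r₀ : ℕ := u₀.card with hr₀
  set ρ₀ : ℕ := ∑ j ∈ u, min (k j) n with hρ₀
  set d : ℕ := m - ρ₀ with hd
  have hfloor : ∀ (i i' : Fin (Fintype.card F ^ m)) (j : Fin s) (l : ℕ),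
      (⌊(Fintype.card F : ℝ)^l * dnet φ C n (i:ℕ) j⌋
        = ⌊(Fintype.card F : ℝ)^l * dnet φ C n (i':ℕ) j⌋)
      ↔ ∀ t, t < min l n → dig φ C j (i':ℕ) t = dig φ C j (i:ℕ) t := by
    intro i i' j l
    rw [dnet_eq_digsum, dnet_eq_digsum, eq_comm]
    exact floor_eq_iff_digits (by omega) (fun t => dig_lt φ C j _ t) (fun t => dig_lt φ C j _ t) l
  have hlv_le : ∀ v : Finset (Fin s), v ⊆ u₀ →
      ∀ j, (if j ∈ v then k j + 1 else min (k j) n) ≤ n := by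
    intro v hv j
    split_ifs with hj
    · have := (mem_filter.mp (hv hj)).2
      omega
    · exact min_le_right _ _
  have hlv_sum : ∀ v : Finset (Fin s), v ⊆ u₀ →
      ∑ j ∈ u, (if j ∈ v then k j + 1 else min (k j) n) = ρ₀ + v.card := by
    intro v hv
    have h1 : ∀ j ∈ u, (if j ∈ v then k j + 1 else min (k j) n)
        = min (k j) n + (if j ∈ v then 1 else 0) := by
      intro j hj
      split_ifs with hjv
      · have := (mem_filter.mp (hv hjv)).2
        omega
      · omega
    rw [sum_congr rfl h1, sum_add_distrib, hρ₀]
    congr 1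
    rw [sum_ite_mem]
    rw [Finset.inter_eq_right.mpr (hv.trans hu₀u)]
    simp
  have hcount : ∀ (i : Fin (Fintype.card F ^ m)) (v : Finset (Fin s)), v ⊆ u₀ →
      ∑ i' : Fin (Fintype.card F ^ m),
        (if (∀ j ∈ u, ∀ t, t < (if j ∈ v then k j + 1 else min (k j) n) →
          dig φ C j (i':ℕ) t = dig φ C j (i:ℕ) t) then (1:ℝ) else 0)
        = (Fintype.card F : ℝ) ^ (d - v.card) := by
    intro i v hv
    rw [Finset.sum_boole]
    have := count_cell φ C n hnet u (fun j => if j ∈ v then k j + 1 else min (k j) n)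
      (hlv_le v hv) i
    rw [this, hlv_sum v hv]
    rw [hd, Nat.sub_add_eq]
    norm_cast
  have key : ∀ i : Fin (Fintype.card F ^ m),
      (∑ i' : Fin (Fintype.card F ^ m), ∏ j ∈ u,
        (((Fintype.card F : ℝ) * (if ⌊(Fintype.card F : ℝ) ^ (k j + 1) * dnet φ C n (i:ℕ) j⌋ =
              ⌊(Fintype.card F : ℝ) ^ (k j + 1) * dnet φ C n (i':ℕ) j⌋ then (1:ℝ) else 0) -
            (if ⌊(Fintype.card F : ℝ) ^ (k j) * dnet φ C n (i:ℕ) j⌋ =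
              ⌊(Fintype.card F : ℝ) ^ (k j) * dnet φ C n (i':ℕ) j⌋ then (1:ℝ) else 0)) /
          ((Fintype.card F : ℝ) - 1)))
      = Tsum (Fintype.card F : ℝ) r₀ d / ((Fintype.card F : ℝ) - 1)^r₀ := by
    intro i
    have step1 : ∀ i' : Fin (Fintype.card F ^ m), ∏ j ∈ u,
        (((Fintype.card F : ℝ) * (if ⌊(Fintype.card F : ℝ) ^ (k j + 1) * dnet φ C n (i:ℕ) j⌋ =
              ⌊(Fintype.card F : ℝ) ^ (k j + 1) * dnet φ C n (i':ℕ) j⌋ then (1:ℝ) else 0) -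
            (if ⌊(Fintype.card F : ℝ) ^ (k j) * dnet φ C n (i:ℕ) j⌋ =
              ⌊(Fintype.card F : ℝ) ^ (k j) * dnet φ C n (i':ℕ) j⌋ then (1:ℝ) else 0)) /
          ((Fintype.card F : ℝ) - 1))
        = (∑ v ∈ u₀.powerset, (Fintype.card F : ℝ)^v.card * (-1)^(r₀ + v.card) *
            (if (∀ j ∈ u, ∀ t, t < (if j ∈ v then k j + 1 else min (k j) n) →
              dig φ C j (i':ℕ) t = dig φ C j (i:ℕ) t) then (1:ℝ) else 0))
          / ((Fintype.card F : ℝ) - 1)^r₀ := by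
      intro i'
      have hfac : ∀ j ∈ u,
          (((Fintype.card F : ℝ) * (if ⌊(Fintype.card F : ℝ) ^ (k j + 1) * dnet φ C n (i:ℕ) j⌋ =
              ⌊(Fintype.card F : ℝ) ^ (k j + 1) * dnet φ C n (i':ℕ) j⌋ then (1:ℝ) else 0) -
            (if ⌊(Fintype.card F : ℝ) ^ (k j) * dnet φ C n (i:ℕ) j⌋ =
              ⌊(Fintype.card F : ℝ) ^ (k j) * dnet φ C n (i':ℕ) j⌋ then (1:ℝ) else 0)) /
          ((Fintype.card F : ℝ) - 1))
          = (((Fintype.card F : ℝ) * (if (∀ t, t < min (k j + 1) n →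
                dig φ C j (i':ℕ) t = dig φ C j (i:ℕ) t) then (1:ℝ) else 0) -
              (if (∀ t, t < min (k j) n →
                dig φ C j (i':ℕ) t = dig φ C j (i:ℕ) t) then (1:ℝ) else 0)) /
            ((Fintype.card F : ℝ) - 1)) := by
        intro j _
        rw [if_congr (hfloor i i' j (k j + 1)) rfl rfl,
          if_congr (hfloor i i' j (k j)) rfl rfl]
      rw [Finset.prod_congr rfl hfac]
      rw [← Finset.prod_filter_mul_prod_filter_not u (fun j => k j < n)]
      have hcompl : ∀ j ∈ u.filter (fun j => ¬ k j < n),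
          (((Fintype.card F : ℝ) * (if (∀ t, t < min (k j + 1) n →
                dig φ C j (i':ℕ) t = dig φ C j (i:ℕ) t) then (1:ℝ) else 0) -
              (if (∀ t, t < min (k j) n →
                dig φ C j (i':ℕ) t = dig φ C j (i:ℕ) t) then (1:ℝ) else 0)) /
            ((Fintype.card F : ℝ) - 1))
          = (if (∀ t, t < min (k j) n →
                dig φ C j (i':ℕ) t = dig φ C j (i:ℕ) t) then (1:ℝ) else 0) := by
        intro j hj
        have hkn : n ≤ k j := by
          have := (mem_filter.mp hj).2
          omega
        have hmin1 : min (k j + 1) n = min (k j) n := by omega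
        rw [hmin1]
        by_cases hP : (∀ t, t < min (k j) n → dig φ C j (i':ℕ) t = dig φ C j (i:ℕ) t)
        · rw [if_pos hP]
          field_simp
        · rw [if_neg hP]
          norm_num
      rw [Finset.prod_congr rfl hcompl]
      have hpull : ∏ j ∈ u₀,
          (((Fintype.card F : ℝ) * (if (∀ t, t < min (k j + 1) n →
                dig φ C j (i':ℕ) t = dig φ C j (i:ℕ) t) then (1:ℝ) else 0) -
              (if (∀ t, t < min (k j) n →
                dig φ C j (i':ℕ) t = dig φ C j (i:ℕ) t) then (1:ℝ) else 0)) /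
            ((Fintype.card F : ℝ) - 1))
          = (∏ j ∈ u₀,
            ((Fintype.card F : ℝ) * (if (∀ t, t < k j + 1 →
                dig φ C j (i':ℕ) t = dig φ C j (i:ℕ) t) then (1:ℝ) else 0) +
              -(if (∀ t, t < k j →
                dig φ C j (i':ℕ) t = dig φ C j (i:ℕ) t) then (1:ℝ) else 0)))
            / ((Fintype.card F : ℝ) - 1)^r₀ := by
        rw [Finset.prod_div_distrib, Finset.prod_const, hr₀]
        congr 1
        apply Finset.prod_congr rfl
        intro j hj
        have hkj : k j < n := (mem_filter.mp hj).2
        rw [show min (k j + 1) n = k j + 1 by omega, show min (k j) n = k j by omega]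
        ring
      rw [hpull]
      rw [Finset.prod_add]
      rw [div_mul_eq_mul_div, Finset.sum_mul]
      congr 1
      apply Finset.sum_congr rfl
      intro v hv
      have hvsub : v ⊆ u₀ := mem_powerset.mp hv
      rw [Finset.prod_mul_distrib, Finset.prod_const]
      have hneg : ∀ j ∈ u₀ \ v,
          (-(if (∀ t, t < k j → dig φ C j (i':ℕ) t = dig φ C j (i:ℕ) t) then (1:ℝ) else 0))
          = (-1) * (if (∀ t, t < k j → dig φ C j (i':ℕ) t = dig φ C j (i:ℕ) t) then (1:ℝ) else 0) := by
        intro j _; ring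
      rw [Finset.prod_congr rfl hneg, Finset.prod_mul_distrib, Finset.prod_const]
      rw [Finset.card_sdiff_of_subset hvsub]
      rw [Finset.prod_boole, Finset.prod_boole, Finset.prod_boole]
      rw [← hr₀, neg_one_pow_sub_eq (by rw [hr₀]; exact card_le_card hvsub)]
      have hiff : (∀ j ∈ u, ∀ t, t < (if j ∈ v then k j + 1 else min (k j) n) →
            dig φ C j (i':ℕ) t = dig φ C j (i:ℕ) t)
          ↔ (((∀ j ∈ v, ∀ t, t < k j + 1 → dig φ C j (i':ℕ) t = dig φ C j (i:ℕ) t)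
              ∧ (∀ j ∈ u₀ \ v, ∀ t, t < k j → dig φ C j (i':ℕ) t = dig φ C j (i:ℕ) t))
            ∧ (∀ j ∈ u.filter (fun j => ¬ k j < n), ∀ t, t < min (k j) n →
                dig φ C j (i':ℕ) t = dig φ C j (i:ℕ) t)) := by
        constructor
        · intro h
          refine ⟨⟨?_, ?_⟩, ?_⟩
          · intro j hjv t ht
            exact h j (hu₀u (hvsub hjv)) t (by rw [if_pos hjv]; exact ht)
          · intro j hj t ht
            obtain ⟨hj0, hjv⟩ := mem_sdiff.mp hj
            have hkn : k j < n := (mem_filter.mp hj0).2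
            exact h j (hu₀u hj0) t (by rw [if_neg hjv]; omega)
          · intro j hj t ht
            have hkn : ¬ k j < n := (mem_filter.mp hj).2
            have hjv : j ∉ v := fun hjv => hkn (mem_filter.mp (hvsub hjv)).2
            exact h j (mem_filter.mp hj).1 t (by rw [if_neg hjv]; exact ht)
        · rintro ⟨⟨hA, hB⟩, hC⟩ j hju t ht
          by_cases hjv : j ∈ v
          · rw [if_pos hjv] at ht
            exact hA j hjv t ht
          · rw [if_neg hjv] at ht
            by_cases hkn : k j < n
            · exact hB j (mem_sdiff.mpr ⟨mem_filter.mpr ⟨hju, hkn⟩, hjv⟩) t (by omega)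
            · exact hC j (mem_filter.mpr ⟨hju, hkn⟩) t ht
      rw [if_congr hiff rfl rfl]
      by_cases hA : (∀ j ∈ v, ∀ t, t < k j + 1 → dig φ C j (i':ℕ) t = dig φ C j (i:ℕ) t)
      · by_cases hB : (∀ j ∈ u₀ \ v, ∀ t, t < k j → dig φ C j (i':ℕ) t = dig φ C j (i:ℕ) t)
        · by_cases hC : (∀ j ∈ u.filter (fun j => ¬ k j < n), ∀ t, t < min (k j) n →
              dig φ C j (i':ℕ) t = dig φ C j (i:ℕ) t)
          · rw [if_pos hA, if_pos hB, if_pos hC, if_pos (And.intro (And.intro hA hB) hC)]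
            ring
          · have hD : ¬ (((∀ j ∈ v, ∀ t, t < k j + 1 → dig φ C j (i':ℕ) t = dig φ C j (i:ℕ) t)
                ∧ (∀ j ∈ u₀ \ v, ∀ t, t < k j → dig φ C j (i':ℕ) t = dig φ C j (i:ℕ) t))
              ∧ (∀ j ∈ u.filter (fun j => ¬ k j < n), ∀ t, t < min (k j) n →
                  dig φ C j (i':ℕ) t = dig φ C j (i:ℕ) t)) := fun hD => hC hD.2
            rw [if_neg hC, if_neg hD]
            ring
        · have hD : ¬ (((∀ j ∈ v, ∀ t, t < k j + 1 → dig φ C j (i':ℕ) t = dig φ C j (i:ℕ) t)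
                ∧ (∀ j ∈ u₀ \ v, ∀ t, t < k j → dig φ C j (i':ℕ) t = dig φ C j (i:ℕ) t))
              ∧ (∀ j ∈ u.filter (fun j => ¬ k j < n), ∀ t, t < min (k j) n →
                  dig φ C j (i':ℕ) t = dig φ C j (i:ℕ) t)) := fun hD => hB hD.1.2
          rw [if_neg hB, if_neg hD]
          ring
      · have hD : ¬ (((∀ j ∈ v, ∀ t, t < k j + 1 → dig φ C j (i':ℕ) t = dig φ C j (i:ℕ) t)
                ∧ (∀ j ∈ u₀ \ v, ∀ t, t < k j → dig φ C j (i':ℕ) t = dig φ C j (i:ℕ) t))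
              ∧ (∀ j ∈ u.filter (fun j => ¬ k j < n), ∀ t, t < min (k j) n →
                  dig φ C j (i':ℕ) t = dig φ C j (i:ℕ) t)) := fun hD => hA hD.1.1
        rw [if_neg hA, if_neg hD]
        ring
    calc (∑ i' : Fin (Fintype.card F ^ m), ∏ j ∈ u,
        (((Fintype.card F : ℝ) * (if ⌊(Fintype.card F : ℝ) ^ (k j + 1) * dnet φ C n (i:ℕ) j⌋ =
              ⌊(Fintype.card F : ℝ) ^ (k j + 1) * dnet φ C n (i':ℕ) j⌋ then (1:ℝ) else 0) -
            (if ⌊(Fintype.card F : ℝ) ^ (k j) * dnet φ C n (i:ℕ) j⌋ =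
              ⌊(Fintype.card F : ℝ) ^ (k j) * dnet φ C n (i':ℕ) j⌋ then (1:ℝ) else 0)) /
          ((Fintype.card F : ℝ) - 1)))
        = ∑ i' : Fin (Fintype.card F ^ m), (∑ v ∈ u₀.powerset,
            (Fintype.card F : ℝ)^v.card * (-1)^(r₀ + v.card) *
            (if (∀ j ∈ u, ∀ t, t < (if j ∈ v then k j + 1 else min (k j) n) →
              dig φ C j (i':ℕ) t = dig φ C j (i:ℕ) t) then (1:ℝ) else 0))
          / ((Fintype.card F : ℝ) - 1)^r₀ := Finset.sum_congr rfl (fun i' _ => step1 i')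
      _ = (∑ v ∈ u₀.powerset, ∑ i' : Fin (Fintype.card F ^ m),
            (Fintype.card F : ℝ)^v.card * (-1)^(r₀ + v.card) *
            (if (∀ j ∈ u, ∀ t, t < (if j ∈ v then k j + 1 else min (k j) n) →
              dig φ C j (i':ℕ) t = dig φ C j (i:ℕ) t) then (1:ℝ) else 0))
          / ((Fintype.card F : ℝ) - 1)^r₀ := by
          rw [← Finset.sum_div, Finset.sum_comm]
      _ = (∑ v ∈ u₀.powerset, (Fintype.card F : ℝ)^v.card * (-1)^(r₀ + v.card) *
            (Fintype.card F : ℝ)^(d - v.card))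
          / ((Fintype.card F : ℝ) - 1)^r₀ := by
          congr 1
          apply Finset.sum_congr rfl
          intro v hv
          rw [← Finset.mul_sum, hcount i v (mem_powerset.mp hv)]
      _ = Tsum (Fintype.card F : ℝ) r₀ d / ((Fintype.card F : ℝ) - 1)^r₀ := by
          congr 1
          rw [Finset.sum_powerset_apply_card
            (f := fun w => (Fintype.card F : ℝ)^w * (-1)^(r₀ + w) * (Fintype.card F : ℝ)^(d - w))
            (x := u₀)]
          rw [Tsum, ← hr₀]
          apply Finset.sum_congr rfl
          intro w _
          rw [nsmul_eq_mul, pow_add]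
          ring
  have hN0 : (0:ℝ) < ((Fintype.card F ^ m : ℕ) : ℝ) := by
    have : 0 < Fintype.card F ^ m := Nat.pow_pos (by omega)
    exact_mod_cast this
  have hgain : gain (Fintype.card F) (Fintype.card F ^ m)
      (fun i j => dnet φ C n (i : ℕ) j) u k
      = Tsum (Fintype.card F : ℝ) r₀ d / ((Fintype.card F : ℝ) - 1)^r₀ := by
    rw [gain]
    rw [Finset.sum_congr rfl (fun i _ => key i)]
    rw [Finset.sum_const, Finset.card_univ, Fintype.card_fin, nsmul_eq_mul]
    have hNne : ((Fintype.card F ^ m : ℕ):ℝ) ≠ 0 := ne_of_gt hN0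
    field_simp
  rw [hgain]
  have hfrac_pos : (0:ℝ) < (Fintype.card F : ℝ) - 1 := by linarith
  have hfrac1 : (1:ℝ) ≤ (Fintype.card F : ℝ)/((Fintype.card F : ℝ)-1) := by
    rw [le_div_iff₀ hfrac_pos]
    linarith
  rcases Nat.eq_zero_or_pos r₀ with h0 | hr₀pos
  · have hu₀e : u₀ = ∅ := card_eq_zero.mp (by rw [← hr₀, h0])
    have hd0 : d = 0 := by
      have hall : ∀ j ∈ u, min (k j) n = n := by
        intro j hj
        have h2 : j ∉ u₀ := by rw [hu₀e]; exact notMem_empty j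
        rw [hu₀] at h2
        have : ¬ k j < n := fun hc => h2 (mem_filter.mpr ⟨hj, hc⟩)
        omega
      have hρeq : ρ₀ = u.card * n := by
        rw [hρ₀, Finset.sum_congr rfl hall, Finset.sum_const, smul_eq_mul]
      have hucard : 1 ≤ u.card := Finset.Nonempty.card_pos hu
      have hnρ : n ≤ ρ₀ := by
        rw [hρeq]
        calc n = 1 * n := (one_mul n).symm
        _ ≤ u.card * n := Nat.mul_le_mul_right n hucard
      rw [hd]
      omega
    rw [h0, hd0]
    have hT : Tsum (Fintype.card F : ℝ) 0 0 = 1 := by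
      rw [Tsum]
      simp
    rw [hT]
    simp only [pow_zero]
    rw [div_one]
    exact one_le_pow₀ hfrac1
  · have hr₀s : r₀ ≤ s := by
      rw [hr₀]
      calc u₀.card ≤ (univ : Finset (Fin s)).card := card_le_card (subset_univ _)
      _ = s := by rw [card_univ, Fintype.card_fin]
    have hcond : 2 ≤ d → r₀ ≤ Fintype.card F + 1 := by
      intro hd2
      have hm2 : 2 ≤ m := by
        have : d ≤ m := by rw [hd]; omega
        omega
      have := s_le_card_add_one C n hnet hn hm2
      omega
    have htle := Tsum_le hb2 hr₀pos hcond
    have hpowpos : (0:ℝ) < ((Fintype.card F : ℝ) - 1)^r₀ := pow_pos hfrac_pos _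
    calc Tsum (Fintype.card F : ℝ) r₀ d / ((Fintype.card F : ℝ) - 1)^r₀
        ≤ (((Fintype.card F : ℝ) - 1) * (Fintype.card F : ℝ)^(r₀-1))
            / ((Fintype.card F : ℝ) - 1)^r₀ := by
          gcongr
    _ = ((Fintype.card F : ℝ)/((Fintype.card F : ℝ)-1))^(r₀-1) := by
          rw [show ((Fintype.card F : ℝ)-1)^r₀
              = ((Fintype.card F : ℝ)-1) * ((Fintype.card F : ℝ)-1)^(r₀-1) by
            rw [← pow_succ']
            congr 1
            omega]
          rw [mul_div_mul_left _ _ hbne, div_pow]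
    _ ≤ ((Fintype.card F : ℝ)/((Fintype.card F : ℝ)-1))^(s-1) :=
          pow_le_pow_right₀ hfrac1 (by omega)

end stmt13aux

/-- for a digital `(0,m,s)`-net in base `b`, every gain coefficient
satisfies `Γ_{u,k} ≤ (b/(b-1))^{s-1}`. -/
theorem stmt13 {F : Type} [Field F] [Fintype F] {s m : ℕ}
    (φ : Fin (Fintype.card F) ≃ F) (hφ : φ ⟨0, Fintype.card_pos⟩ = 0)
    (C : Fin s → ℕ → Fin m → F) (n : ℕ) (hn : m ≤ n)
    (hnet : IsDigitalTNet C n 0)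
    (u : Finset (Fin s)) (hu : u.Nonempty) (k : Fin s → ℕ) :
    gain (Fintype.card F) (Fintype.card F ^ m) (fun i j => dnet φ C n (i : ℕ) j) u k ≤
      ((Fintype.card F : ℝ) / ((Fintype.card F : ℝ) - 1)) ^ (s - 1) :=
  main_bound φ C n hn hnet u hu k
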